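/- arXiv:1202.4985 — 3 statements merged into one kernel-verified Lean document; each statement's English description precedes it below -/
import Mathlib

section
/- Let (Y, d_H) be a metric space, π : D → Y a map, and h : D → (0, M] with M > 0. The function g(p,q) := 2 log((d_H(π(p),π(q)) + max(h(p),h(q)))/√(h(p)h(q))) satisfies the triangle inequality: g(p,r) ≤ g(p,q) + g(q,r) for all p,q,r ∈ D. -/
/-- The Balogh–Bonk function satisfies the triangle inequality. -/
theorem balogh_bonk_triangle {D Y : Type*} [MetricSpace Y]
    (π : D → Y) (h : D → ℝ) (M : ℝ) (hM : 0 < M)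
    (hpos : ∀ p, 0 < h p) (hbdd : ∀ p, h p ≤ M)
    (g : D → D → ℝ)
    (hg : ∀ p q, g p q =
      2 * Real.log ((dist (π p) (π q) + max (h p) (h q)) / Real.sqrt (h p * h q))) :
    ∀ p q r : D, g p r ≤ g p q + g q r := by
  intro p q r
  rw [hg, hg, hg]
  set a := dist (π p) (π q) + max (h p) (h q) with ha
  set b := dist (π q) (π r) + max (h q) (h r) with hb
  set c := dist (π p) (π r) + max (h p) (h r) with hc
  have hpq := hpos p
  have hqq := hpos q
  have hrq := hpos r
  have hapos : 0 < a := by positivity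
  have hbpos : 0 < b := by positivity
  have hcpos : 0 < c := by positivity
  have key : c * h q ≤ a * b := by
    have htri := dist_triangle (π p) (π q) (π r)
    have h1 : h q ≤ max (h p) (h q) := le_max_right _ _
    have h2 : h q ≤ max (h q) (h r) := le_max_left _ _
    have hmax : h q * max (h p) (h r) ≤ max (h p) (h q) * max (h q) (h r) := by
      rcases le_total (h p) (h r) with hle | hle
      · have : max (h p) (h r) = h r := max_eq_right hle
        rw [this]
        have : h r ≤ max (h q) (h r) := le_max_right _ _
        nlinarith [le_max_right (h p) (h q)]
      · have : max (h p) (h r) = h p := max_eq_left hle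
        rw [this]
        have : h p ≤ max (h p) (h q) := le_max_left _ _
        nlinarith [le_max_left (h q) (h r)]
    have hd1 : dist (π p) (π q) * h q ≤ dist (π p) (π q) * max (h q) (h r) := by
      exact mul_le_mul_of_nonneg_left h2 dist_nonneg
    have hd2 : dist (π q) (π r) * h q ≤ max (h p) (h q) * dist (π q) (π r) := by
      have := mul_le_mul_of_nonneg_left h1 (dist_nonneg (x := π q) (y := π r))
      nlinarith
    nlinarith [mul_nonneg (dist_nonneg (x := π p) (y := π q)) (dist_nonneg (x := π q) (y := π r)), hqq.le]
  have hspr : 0 < Real.sqrt (h p * h r) := Real.sqrt_pos.mpr (by positivity)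
  have hspq : 0 < Real.sqrt (h p * h q) := Real.sqrt_pos.mpr (by positivity)
  have hsqr : 0 < Real.sqrt (h q * h r) := Real.sqrt_pos.mpr (by positivity)
  have hprod : Real.sqrt (h p * h q) * Real.sqrt (h q * h r) = h q * Real.sqrt (h p * h r) := by
    rw [← Real.sqrt_mul (by positivity)]
    rw [show h p * h q * (h q * h r) = h q ^ 2 * (h p * h r) by ring]
    rw [Real.sqrt_mul (by positivity), Real.sqrt_sq hqq.le]
  have hX : c / Real.sqrt (h p * h r) ≤
      (a / Real.sqrt (h p * h q)) * (b / Real.sqrt (h q * h r)) := by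
    rw [div_mul_div_comm, div_le_div_iff₀ hspr (by positivity), hprod]
    calc c * (h q * Real.sqrt (h p * h r)) = (c * h q) * Real.sqrt (h p * h r) := by ring
    _ ≤ (a * b) * Real.sqrt (h p * h r) := by
        exact mul_le_mul_of_nonneg_right key hspr.le
  have hlog := Real.log_le_log (by positivity) hX
  rw [Real.log_mul (by positivity) (by positivity)] at hlog
  linarith
end

section
/- Let (Y, d_H) be a metric space, π : D → Y, and h : D → (0,∞). Then the function g(p,q) := 2 log((d_H(π(p),π(q)) + max(h(p),h(q)))/√(h(p)h(q))) satisfies the four-point Gromov hyperbolicity condition: there exists δ ≥ 0 such that g(x,y) + g(z,w) ≤ max(g(x,z) + g(y,w), g(x,w) + g(y,z)) + 2δ for all x,y,z,w ∈ D. -/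
lemma bb_quad (C C' D D' a b : ℝ) (hC : 0 ≤ C) (hC' : 0 ≤ C') (hD : 0 ≤ D) (hD' : 0 ≤ D')
    (ha : 0 ≤ a) (hb : 0 ≤ b)
    (h1 : a ≤ C + D') (h2 : a ≤ C' + D) (h3 : b ≤ C + C') (h4 : b ≤ D + D') :
    a * b ≤ 4 * max (C * D) (C' * D') := by
  have p1 : a * b ≤ (C + D') * (C + C') := mul_le_mul h1 h3 hb (by linarith)
  have p2 : a * b ≤ (C + D') * (D + D') := mul_le_mul h1 h4 hb (by linarith)
  have p3 : a * b ≤ (C' + D) * (C + C') := mul_le_mul h2 h3 hb (by linarith)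
  have p4 : a * b ≤ (C' + D) * (D + D') := mul_le_mul h2 h4 hb (by linarith)
  rcases le_total (C * D) (C' * D') with hM | hM
  · rw [max_eq_right hM]
    rcases le_total C D' with h5 | h5 <;> rcases le_total C' D with h6 | h6 <;>
      nlinarith [mul_nonneg hC hD, mul_nonneg hC' hD', mul_nonneg hC hC', mul_nonneg hD hD',
        mul_nonneg hC hD', mul_nonneg hC' hD]
  · rw [max_eq_left hM]
    rcases le_total C D' with h5 | h5 <;> rcases le_total C' D with h6 | h6 <;>
      nlinarith [mul_nonneg hC hD, mul_nonneg hC' hD', mul_nonneg hC hC', mul_nonneg hD hD',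
        mul_nonneg hC hD', mul_nonneg hC' hD]

/-- The Balogh–Bonk function satisfies the four-point Gromov hyperbolicity condition. -/
theorem balogh_bonk_gromov_hyperbolic {D Y : Type*} [MetricSpace Y]
    (π : D → Y) (h : D → ℝ) (hpos : ∀ p, 0 < h p)
    (g : D → D → ℝ)
    (hg : ∀ p q, g p q =
      2 * Real.log ((dist (π p) (π q) + max (h p) (h q)) / Real.sqrt (h p * h q))) :
    ∃ δ : ℝ, 0 ≤ δ ∧ ∀ x y z w : D,
      g x y + g z w ≤ max (g x z + g y w) (g x w + g y z) + 2 * δ := by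
  set ρ : D → D → ℝ := fun p q => dist (π p) (π q) + max (h p) (h q) with hρ
  have hρpos : ∀ p q, 0 < ρ p q := fun p q =>
    add_pos_of_nonneg_of_pos dist_nonneg (lt_max_of_lt_left (hpos p))
  have hρsymm : ∀ p q, ρ p q = ρ q p := fun p q => by
    simp only [hρ, dist_comm, max_comm]
  have htri : ∀ p q r, ρ p q ≤ ρ p r + ρ r q := by
    intro p q r
    have hd : dist (π p) (π q) ≤ dist (π p) (π r) + dist (π r) (π q) := dist_triangle _ _ _
    have hm : max (h p) (h q) ≤ max (h p) (h r) + max (h r) (h q) :=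
      max_le (le_add_of_le_of_nonneg (le_max_left _ _) (le_of_lt (lt_max_of_lt_left (hpos r))))
        (le_add_of_nonneg_of_le (le_of_lt (lt_max_of_lt_left (hpos p))) (le_max_right _ _))
    simp only [hρ]; linarith
  have hg' : ∀ p q, g p q = 2 * Real.log (ρ p q) - Real.log (h p) - Real.log (h q) := by
    intro p q
    have hpq : (0:ℝ) < h p * h q := mul_pos (hpos p) (hpos q)
    rw [hg, Real.log_div (ne_of_gt (hρpos p q)) (ne_of_gt (Real.sqrt_pos.2 hpq)),
      Real.log_sqrt hpq.le, Real.log_mul (ne_of_gt (hpos p)) (ne_of_gt (hpos q))]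
    ring
  refine ⟨Real.log 4, Real.log_nonneg (by norm_num), fun x y z w => ?_⟩
  have key : ρ x y * ρ z w ≤ 4 * max (ρ x z * ρ y w) (ρ x w * ρ y z) := by
    refine bb_quad (ρ x z) (ρ x w) (ρ y w) (ρ y z) (ρ x y) (ρ z w)
      (hρpos x z).le (hρpos x w).le (hρpos y w).le (hρpos y z).le
      (hρpos x y).le (hρpos z w).le ?_ ?_ ?_ ?_
    · calc ρ x y ≤ ρ x z + ρ z y := htri x y z
        _ = ρ x z + ρ y z := by rw [hρsymm z y]
    · calc ρ x y ≤ ρ x w + ρ w y := htri x y w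
        _ = ρ x w + ρ y w := by rw [hρsymm w y]
    · calc ρ z w ≤ ρ z x + ρ x w := htri z w x
        _ = ρ x z + ρ x w := by rw [hρsymm z x]
    · calc ρ z w ≤ ρ z y + ρ y w := htri z w y
        _ = ρ y w + ρ y z := by rw [hρsymm z y]; ring
  have keylog : 2 * Real.log (ρ x y) + 2 * Real.log (ρ z w) ≤
      max (2 * Real.log (ρ x z) + 2 * Real.log (ρ y w))
        (2 * Real.log (ρ x w) + 2 * Real.log (ρ y z)) + 2 * Real.log 4 := by
    rcases le_total (ρ x z * ρ y w) (ρ x w * ρ y z) with hM | hM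
    · rw [max_eq_right hM] at key
      have hlog : Real.log (ρ x y * ρ z w) ≤ Real.log (4 * (ρ x w * ρ y z)) :=
        Real.log_le_log (mul_pos (hρpos x y) (hρpos z w)) key
      rw [Real.log_mul (ne_of_gt (hρpos x y)) (ne_of_gt (hρpos z w)),
        Real.log_mul (by norm_num) (ne_of_gt (mul_pos (hρpos x w) (hρpos y z))),
        Real.log_mul (ne_of_gt (hρpos x w)) (ne_of_gt (hρpos y z))] at hlog
      have := le_max_right (2 * Real.log (ρ x z) + 2 * Real.log (ρ y w))
        (2 * Real.log (ρ x w) + 2 * Real.log (ρ y z))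
      linarith
    · rw [max_eq_left hM] at key
      have hlog : Real.log (ρ x y * ρ z w) ≤ Real.log (4 * (ρ x z * ρ y w)) :=
        Real.log_le_log (mul_pos (hρpos x y) (hρpos z w)) key
      rw [Real.log_mul (ne_of_gt (hρpos x y)) (ne_of_gt (hρpos z w)),
        Real.log_mul (by norm_num) (ne_of_gt (mul_pos (hρpos x z) (hρpos y w))),
        Real.log_mul (ne_of_gt (hρpos x z)) (ne_of_gt (hρpos y w))] at hlog
      have := le_max_left (2 * Real.log (ρ x z) + 2 * Real.log (ρ y w))
        (2 * Real.log (ρ x w) + 2 * Real.log (ρ y z))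
      linarith
  rw [hg' x y, hg' z w, hg' x z, hg' y w, hg' x w, hg' y z]
  have hrw : max ((2 * Real.log (ρ x z) - Real.log (h x) - Real.log (h z)) +
        (2 * Real.log (ρ y w) - Real.log (h y) - Real.log (h w)))
      ((2 * Real.log (ρ x w) - Real.log (h x) - Real.log (h w)) +
        (2 * Real.log (ρ y z) - Real.log (h y) - Real.log (h z))) =
      max (2 * Real.log (ρ x z) + 2 * Real.log (ρ y w))
        (2 * Real.log (ρ x w) + 2 * Real.log (ρ y z)) +
      (- Real.log (h x) - Real.log (h y) - Real.log (h z) - Real.log (h w)) := by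
    rw [← max_add_add_right]; ring_nf
  rw [hrw]; linarith
end

section
/- Let Q be a real quadratic form on ℝ^{2n} and J : ℝ^{2n} → ℝ^{2n} the standard complex structure (J² = −Id). If Q(v) + Q(Jv) > 0 for every nonzero v, then every subspace on which Q is negative definite has dimension at most n. -/
noncomputable def Jmap (n : ℕ) : EuclideanSpace ℂ (Fin n) ≃ₗ[ℝ] EuclideanSpace ℂ (Fin n) :=
  { toFun := fun v => Complex.I • v
    map_add' := fun a b => smul_add _ _ _
    map_smul' := fun r v => smul_comm _ _ _
    invFun := fun v => (-Complex.I) • v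
    left_inv := fun v => by simp [smul_smul]
    right_inv := fun v => by simp [smul_smul] }

/-- If `Q` is a real quadratic form on `ℝ²ⁿ ≅ ℂⁿ` such that `Q(v) + Q(Jv) > 0` for
every nonzero `v` (`J` being multiplication by `i`), then every subspace on which `Q`
is negative definite has real dimension at most `n`. -/
theorem neg_definite_subspace_dim_le {n : ℕ}
    (Q : QuadraticForm ℝ (EuclideanSpace ℂ (Fin n)))
    (hQ : ∀ v : EuclideanSpace ℂ (Fin n), v ≠ 0 → 0 < Q v + Q (Complex.I • v)) :
    ∀ W : Submodule ℝ (EuclideanSpace ℂ (Fin n)),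
      (∀ v ∈ W, v ≠ 0 → Q v < 0) → Module.finrank ℝ W ≤ n := by
  intro W hW
  set J := Jmap n
  have hdisj : W ⊓ W.map J.toLinearMap = ⊥ := by
    rw [eq_bot_iff]
    rintro v ⟨hvW, w, hwW, rfl⟩
    by_contra hv0
    rw [Submodule.mem_bot] at hv0
    have hw0 : w ≠ 0 := by
      intro h; apply hv0; simp [h, J, Jmap]
    have h1 : Q (J w) < 0 := hW _ hvW hv0
    have h2 : Q (Complex.I • (J w)) < 0 := by
      have : Complex.I • (J w : EuclideanSpace ℂ (Fin n)) = -w := by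
        simp [J, Jmap, smul_smul]
      rw [this, QuadraticMap.map_neg]
      exact hW _ hwW hw0
    have := hQ (J w) (by simpa using hv0)
    linarith
  have hmap : Module.finrank ℝ (W.map J.toLinearMap) = Module.finrank ℝ W :=
    LinearEquiv.finrank_map_eq J W
  have hsum := Submodule.finrank_sup_add_finrank_inf_eq W (W.map J.toLinearMap)
  rw [hdisj] at hsum
  simp [hmap] at hsum
  have hle : Module.finrank ℝ ↥(W ⊔ W.map J.toLinearMap) ≤ Module.finrank ℝ (EuclideanSpace ℂ (Fin n)) :=
    Submodule.finrank_le _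
  have hdim : Module.finrank ℝ (EuclideanSpace ℂ (Fin n)) = 2 * n := by
    rw [← Module.finrank_mul_finrank ℝ ℂ (EuclideanSpace ℂ (Fin n))]
    simp [Complex.finrank_real_complex, finrank_euclideanSpace]
  omega
end
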